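/- Let R be a unital associative F-algebra, P(t) ∈ R[t] monic of degree n, and S a set of pseudo-roots of P(t) containing elements a_1,…,a_n with P(t) = (t − a_1)(t − a_2)⋯(t − a_n). Let Γ(P,S) be the layered graph of right divisors of P with respect to S, let A(Γ(P,S)) be its associated algebra and 𝒫(t) ∈ A(Γ(P,S))[t] its associated polynomial (defined via any directed path from the source P(t) to the sink 1). Then there exists an F-algebra homomorphism α : A(Γ(P,S)) → R sending each edge (B_1, B_2, x) to x, and the induced homomorphism A(Γ(P,S))[t] → R[t] maps 𝒫(t) to P(t). -/
import Mathlib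


open Polynomial

/-- A directed graph: a set `V` of vertices, a set `E` of edges, and tail/head maps. -/
structure DGraph (V E : Type*) where
  tl : E → V
  hd : E → V

namespace DGraph

variable {V E : Type*} (G : DGraph V E)

/-- `DPath G u l v`: the list of edges `l` is a positive (directed) path from `u` to `v`. -/
inductive DPath : V → List E → V → Prop
  | nil (v : V) : DPath v [] v
  | cons (e : E) {w : V} {l : List E} : DPath (G.hd e) l w → DPath (G.tl e) (e :: l) w

/-- There is a positive path from `u` to `v`. -/
def Reach (u v : V) : Prop := ∃ l : List E, G.DPath u l v

/-- A source is a vertex which is not the head of any edge. -/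
def IsSource (v : V) : Prop := ∀ e : E, G.hd e ≠ v

/-- A sink is a vertex which is not the tail of any edge. -/
def IsSink (v : V) : Prop := ∀ e : E, G.tl e ≠ v

/-- A graph is simple if edges are determined by their endpoints. -/
def Simple : Prop := ∀ e f : E, G.tl e = G.tl f → G.hd e = G.hd f → e = f

/-- A graph is acyclic if there is no nonempty directed path from a vertex to itself. -/
def Acyclic : Prop := ∀ (v : V) (l : List E), G.DPath v l v → l = []

/-- A graph is layered if it admits a rank function decreasing by 1 along each edge. -/
def Layered : Prop := ∃ r : V → ℕ, ∀ e : E, r (G.tl e) = r (G.hd e) + 1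

/-- A graph is modular if any two edges with a common tail can be completed downwards to a
diamond, and any two edges with a common head can be completed upwards to a diamond. -/
def Modular : Prop :=
  (∀ e₁ e₂ : E, G.tl e₁ = G.tl e₂ →
    ∃ f₁ f₂ : E, G.hd f₁ = G.hd f₂ ∧ G.hd e₁ = G.tl f₁ ∧ G.hd e₂ = G.tl f₂) ∧
  (∀ f₁ f₂ : E, G.hd f₁ = G.hd f₂ →
    ∃ e₁ e₂ : E, G.tl e₁ = G.tl e₂ ∧ G.hd e₁ = G.tl f₁ ∧ G.hd e₂ = G.tl f₂)

/-- A set of edges `E₀` is complete if it is closed under `D`- and `U`-operations: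
whenever `e₁, e₂, f₁, f₂` form a diamond (`t(e₁) = t(e₂)`, `h(f₁) = h(f₂)`,
`h(eᵢ) = t(fᵢ)`), if `e₁, e₂ ∈ E₀` then `f₁, f₂ ∈ E₀`, and if `f₁, f₂ ∈ E₀` then
`e₁, e₂ ∈ E₀`. -/
def CompleteSet (E₀ : Set E) : Prop :=
  (∀ e₁ e₂ f₁ f₂ : E, e₁ ∈ E₀ → e₂ ∈ E₀ → G.tl e₁ = G.tl e₂ → G.hd f₁ = G.hd f₂ →
    G.hd e₁ = G.tl f₁ → G.hd e₂ = G.tl f₂ → f₁ ∈ E₀ ∧ f₂ ∈ E₀) ∧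
  (∀ e₁ e₂ f₁ f₂ : E, f₁ ∈ E₀ → f₂ ∈ E₀ → G.tl e₁ = G.tl e₂ → G.hd f₁ = G.hd f₂ →
    G.hd e₁ = G.tl f₁ → G.hd e₂ = G.tl f₂ → e₁ ∈ E₀ ∧ e₂ ∈ E₀)

/-- The set of all heads and tails of edges in `E₀`. -/
def VertexOf (E₀ : Set E) : Set V := {v | ∃ e ∈ E₀, G.tl e = v ∨ G.hd e = v}

/-- One step of a walk traversing an edge of `E₀` in either direction. -/
def EdgeStep (E₀ : Set E) (v w : V) : Prop :=
  ∃ e ∈ E₀, (G.tl e = v ∧ G.hd e = w) ∨ (G.tl e = w ∧ G.hd e = v)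

/-- A set of edges is connected if any two of its vertices are joined by a walk
traversing its edges in either direction. -/
def ConnectedEdges (E₀ : Set E) : Prop :=
  ∀ v ∈ G.VertexOf E₀, ∀ w ∈ G.VertexOf E₀, Relation.ReflTransGen (G.EdgeStep E₀) v w

/-- A set of vertices `W` is ample if for every non-sink `v` there is `u ∈ W` with no
positive path from `u` to `v`, and for every non-source `v` there is `w ∈ W` with no
positive path from `v` to `w`. -/
def AmpleVerts (W : Set V) : Prop :=
  (∀ v : V, ¬ G.IsSink v → ∃ u ∈ W, ¬ G.Reach u v) ∧
  (∀ v : V, ¬ G.IsSource v → ∃ w ∈ W, ¬ G.Reach v w)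

/-- A set of edges is ample if the set of its tails and heads is ample. -/
def AmpleEdges (E₀ : Set E) : Prop := G.AmpleVerts (G.VertexOf E₀)

end DGraph

/-- `U_π(t) = (t − e₁)(t − e₂)⋯(t − e_k) ∈ T(E)[t]` for a path `π = (e₁,…,e_k)`. -/
noncomputable def Upoly (F : Type*) [Field F] {E : Type*} (l : List E) :
    Polynomial (FreeAlgebra F E) :=
  (l.map (fun e => Polynomial.X - Polynomial.C (FreeAlgebra.ι F e))).prod

/-- The relations of `A(Γ)`: corresponding coefficients of `U_{π₁}(t)` and `U_{π₂}(t)`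
are identified, for any two directed paths `π₁, π₂` with the same tail and the same
head. -/
inductive PathRel (F : Type*) [Field F] {V E : Type*} (G : DGraph V E) :
    FreeAlgebra F E → FreeAlgebra F E → Prop
  | rel {u v : V} {l₁ l₂ : List E} (h₁ : G.DPath u l₁ v) (h₂ : G.DPath u l₂ v)
      (hne₁ : l₁ ≠ []) (hne₂ : l₂ ≠ []) (m : ℕ) :
      PathRel F G ((Upoly F l₁).coeff m) ((Upoly F l₂).coeff m)

/-- The algebra `A(Γ)` associated with a directed graph `Γ`: the quotient of the free
algebra `T(E)` by the two-sided ideal generated by the differences of corresponding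
coefficients of `U_{π₁}(t)` and `U_{π₂}(t)`. -/
def AGraph (F : Type*) [Field F] {V E : Type*} (G : DGraph V E) : Type _ :=
  RingQuot (PathRel F G)

noncomputable instance (F : Type*) [Field F] {V E : Type*} (G : DGraph V E) :
    Ring (AGraph F G) :=
  inferInstanceAs (Ring (RingQuot (PathRel F G)))

noncomputable instance (F : Type*) [Field F] {V E : Type*} (G : DGraph V E) :
    Algebra F (AGraph F G) :=
  inferInstanceAs (Algebra F (RingQuot (PathRel F G)))

/-- The image in `A(Γ)` of an edge `e`. -/
noncomputable def aedge (F : Type*) [Field F] {V E : Type*} (G : DGraph V E) (e : E) :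
    AGraph F G :=
  RingQuot.mkAlgHom F (PathRel F G) (FreeAlgebra.ι F e)

/-- The polynomial `(t − e₁)⋯(t − e_k) ∈ A(Γ)[t]` associated with a list of edges. -/
noncomputable def UpolyA (F : Type*) [Field F] {V E : Type*} (G : DGraph V E)
    (l : List E) : Polynomial (AGraph F G) :=
  (l.map (fun e => Polynomial.X - Polynomial.C (aedge F G e))).prod

/-- Vertices of the graph `Γ(P,S)` of right divisors: monic polynomials dividing `P`
from the right. -/
abbrev DivVert {R : Type*} [Ring R] (P : Polynomial R) : Type _ :=
  {B : Polynomial R // B.Monic ∧ ∃ Q : Polynomial R, P = Q * B}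

/-- Edges of `Γ(P,S)`: triples `(B₁, B₂, x)` with `x ∈ S` and `B₁ = (t − x)·B₂`. -/
abbrev DivEdge {R : Type*} [Ring R] (P : Polynomial R) (S : Set R) : Type _ :=
  {T : DivVert P × DivVert P × R //
    T.2.2 ∈ S ∧
      (T.1 : Polynomial R) = (Polynomial.X - Polynomial.C T.2.2) * (T.2.1 : Polynomial R)}

/-- The layered graph `Γ(P,S)` of right divisors of `P` with respect to a set `S` of
pseudo-roots: the edge `(B₁, B₂, x)` has tail `B₁` and head `B₂`. -/
def divGraph {R : Type*} [Ring R] (P : Polynomial R) (S : Set R) :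
    DGraph (DivVert P) (DivEdge P S) :=
  ⟨fun e => e.1.1, fun e => e.1.2.1⟩

section Aux
variable (F : Type*) [Field F] {R : Type*} [Ring R] [Algebra F R]
  (P : Polynomial R) (S : Set R)

noncomputable def phiR : FreeAlgebra F (DivEdge P S) →ₐ[F] R :=
  FreeAlgebra.lift F (fun e => e.1.2.2)

theorem phiR_path {u v : DivVert P} {l : List (DivEdge P S)}
    (h : (divGraph P S).DPath u l v) :
    Polynomial.map (phiR F P S : _ →+* R) (Upoly F l) * (v : Polynomial R)
      = (u : Polynomial R) := by
  induction h with
  | nil w => simp [Upoly]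
  | cons e h ih =>
      rw [Upoly, List.map_cons, List.prod_cons, Polynomial.map_mul, mul_assoc, ← Upoly, ih]
      simp [divGraph, phiR, e.2.2.symm]

theorem phiR_rel {x y : FreeAlgebra F (DivEdge P S)}
    (h : PathRel F (divGraph P S) x y) : phiR F P S x = phiR F P S y := by
  cases h with
  | @rel u v l₁ l₂ h₁ h₂ hne₁ hne₂ m =>
  have hv : (v : Polynomial R).Monic := v.2.1
  have : Polynomial.map (phiR F P S : _ →+* R) (Upoly F l₁)
      = Polynomial.map (phiR F P S : _ →+* R) (Upoly F l₂) :=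
    hv.isRegular.right ((phiR_path F P S h₁).trans (phiR_path F P S h₂).symm)
  have := congrArg (fun p => Polynomial.coeff p m) this
  simpa [Polynomial.coeff_map] using this

noncomputable def alphaR : AGraph F (divGraph P S) →ₐ[F] R :=
  RingQuot.liftAlgHom F ⟨phiR F P S, fun _ _ h => phiR_rel F P S h⟩

theorem alphaR_aedge (e : DivEdge P S) :
    alphaR F P S (aedge F (divGraph P S) e) = e.1.2.2 := by
  exact (RingQuot.liftAlgHom_mkAlgHom_apply (S := F) (phiR F P S)
    (fun _ _ h => phiR_rel F P S h) (FreeAlgebra.ι F e)).trans (by simp [phiR])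

end Aux

/-- Universality of `A(Γ)`: if `P(t) ∈ R[t]` is monic of degree `n`, `S` is a set of
pseudo-roots of `P` containing `a₁,…,aₙ` with `P(t) = (t−a₁)⋯(t−aₙ)`, then there is a
canonical homomorphism `α : A(Γ(P,S)) → R` sending each edge `(B₁,B₂,x)` to `x`, whose
induced homomorphism on polynomials maps `𝒫(t)` to `P(t)`. -/
theorem stmt12 (F : Type*) [Field F] {R : Type*} [Ring R] [Algebra F R]
    (n : ℕ) (P : Polynomial R) (hP : P.Monic) (hdeg : P.natDegree = n)
    (S : Set R)
    (hS : ∀ x ∈ S, ∃ Q₁ Q₂ : Polynomial R,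
      P = Q₁ * (Polynomial.X - Polynomial.C x) * Q₂)
    (a : Fin n → R) (ha : ∀ k, a k ∈ S)
    (hfact : P = ((List.finRange n).map
      (fun k => Polynomial.X - Polynomial.C (a k))).prod) :
    ∃ α : AGraph F (divGraph P S) →ₐ[F] R,
      (∀ e : DivEdge P S, α (aedge F (divGraph P S) e) = e.1.2.2) ∧
      ∀ l : List (DivEdge P S),
        (divGraph P S).DPath ⟨P, hP, 1, (one_mul P).symm⟩ l
          ⟨1, Polynomial.monic_one, P, (mul_one P).symm⟩ →
        Polynomial.map (α : AGraph F (divGraph P S) →+* R) (UpolyA F (divGraph P S) l)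
          = P := by
  
  refine ⟨alphaR F P S, alphaR_aedge F P S, fun l hl => ?_⟩
  have key : Polynomial.map (alphaR F P S : _ →+* R) (UpolyA F (divGraph P S) l)
      = Polynomial.map (phiR F P S : _ →+* R) (Upoly F l) := by
    unfold UpolyA Upoly
    rw [Polynomial.map_list_prod, Polynomial.map_list_prod, List.map_map, List.map_map]
    congr 1
    refine List.map_congr_left (fun e _ => ?_)
    have h1 : alphaR F P S (aedge F (divGraph P S) e) = phiR F P S (FreeAlgebra.ι F e) := by
      exact RingQuot.liftAlgHom_mkAlgHom_apply (S := F) (phiR F P S)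
        (fun _ _ h => phiR_rel F P S h) (FreeAlgebra.ι F e)
    simp [h1]
  rw [key]
  have := phiR_path F P S hl
  simpa using this
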